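/- (Input constraint LMI) Let E be symmetric positive definite, γ > 0, Y ∈ ℝ^{m×n}, c a 1×m row vector, and b > 0. If the block matrix [[b², cY], [Yᵀcᵀ, γE]] is positive semidefinite, then with K = γ⁻¹ Y E⁻¹, for every x with xᵀE⁻¹x ≤ γ it holds that c·(Kx) ≤ b. -/

import Mathlib

open Matrix

theorem stmt_5 {n m : ℕ} (E : Matrix (Fin n) (Fin n) ℝ) (hE : E.PosDef) (hEsymm : E.IsSymm)
    (γ : ℝ) (hγ : 0 < γ) (Y : Matrix (Fin m) (Fin n) ℝ) (c : Fin m → ℝ) (b : ℝ) (hb : 0 < b)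
    (hPSD : ∀ z : Fin 1 ⊕ Fin n → ℝ,
      0 ≤ z ⬝ᵥ (Matrix.fromBlocks (Matrix.of fun _ _ => b ^ 2)
        (Matrix.replicateRow (Fin 1) (c ᵥ* Y)) (Matrix.replicateCol (Fin 1) ((c ᵥ* Y)))
        (γ • E)).mulVec z)
    (K : Matrix (Fin m) (Fin n) ℝ) (hK : K = γ⁻¹ • (Y * E⁻¹)) :
    ∀ x : Fin n → ℝ, x ⬝ᵥ E⁻¹.mulVec x ≤ γ → c ⬝ᵥ K.mulVec x ≤ b := by
  intro x hx
  have hdet : IsUnit E.det := isUnit_iff_ne_zero.mpr hE.det_pos.ne'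
  set w : Fin n → ℝ := E⁻¹ *ᵥ x with hw
  set α : ℝ := -(b/γ) with hα
  set D : ℝ := c ⬝ᵥ (Y * E⁻¹) *ᵥ x with hD
  have hEw : E *ᵥ w = x := by
    rw [hw, mulVec_mulVec, Matrix.mul_nonsing_inv E hdet, one_mulVec]
  have key := hPSD (Sum.elim (fun _ => (1:ℝ)) (α • w))
  rw [fromBlocks_mulVec, sumElim_dotProduct_sumElim] at key
  simp only [Sum.elim_comp_inl, Sum.elim_comp_inr] at key
  have h1 : (fun _ : Fin 1 => (1:ℝ)) ⬝ᵥ ((Matrix.of fun _ _ : Fin 1 => b ^ 2) *ᵥ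
      (fun _ => (1:ℝ)) + (Matrix.replicateRow (Fin 1) (c ᵥ* Y)) *ᵥ (α • w)) = b ^ 2 + α * D := by
    have hcyw : (c ᵥ* Y) ⬝ᵥ w = D := by
      rw [hD, hw, ← dotProduct_mulVec, mulVec_mulVec]
    simp [dotProduct, Matrix.mulVec, Matrix.replicateRow, Fin.sum_univ_one, mul_add]
    rw [show (∑ i, Y.vecMul c i * (α * w i)) = α * ((c ᵥ* Y) ⬝ᵥ w) by
      simp only [dotProduct, Finset.mul_sum]
      exact Finset.sum_congr rfl fun i _ => by ring]
    rw [hcyw]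
  have h2 : (α • w) ⬝ᵥ ((Matrix.replicateCol (Fin 1) (c ᵥ* Y)) *ᵥ (fun _ => (1:ℝ)) +
      (γ • E) *ᵥ (α • w)) = α * D + γ * α ^ 2 * (x ⬝ᵥ E⁻¹ *ᵥ x) := by
    have hcyw : w ⬝ᵥ (c ᵥ* Y) = D := by
      rw [hD, hw, dotProduct_comm, ← dotProduct_mulVec, mulVec_mulVec]
    have hwEw : w ⬝ᵥ E *ᵥ w = x ⬝ᵥ E⁻¹ *ᵥ x := by
      rw [hEw, hw, dotProduct_comm]
    rw [dotProduct_add]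
    have hA : (α • w) ⬝ᵥ ((Matrix.replicateCol (Fin 1) (c ᵥ* Y)) *ᵥ (fun _ => (1:ℝ))) = α * D := by
      rw [smul_dotProduct]
      simp only [smul_eq_mul]
      congr 1
      rw [← hcyw]
      simp [dotProduct, Matrix.mulVec, Matrix.replicateCol, Fin.sum_univ_one]
    have hB : (α • w) ⬝ᵥ ((γ • E) *ᵥ (α • w)) = γ * α ^ 2 * (x ⬝ᵥ E⁻¹ *ᵥ x) := by
      rw [smul_mulVec, mulVec_smul, smul_dotProduct, dotProduct_smul, dotProduct_smul,
        hwEw]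
      simp only [smul_eq_mul]; ring
    rw [hA, hB]
  rw [h1, h2, hα] at key
  have hcK : c ⬝ᵥ K *ᵥ x = γ⁻¹ * D := by
    rw [hK, smul_mulVec, dotProduct_smul, smul_eq_mul, hD]
  rw [hcK]
  have h0 : 0 ≤ x ⬝ᵥ E⁻¹ *ᵥ x := by
    have := (hE.inv).posSemidef.dotProduct_mulVec_nonneg x
    simpa using this
  have hα2 : γ * (-(b/γ)) ^ 2 * (x ⬝ᵥ E⁻¹ *ᵥ x) ≤ b ^ 2 := by
    have h3 : γ * (-(b/γ)) ^ 2 * (x ⬝ᵥ E⁻¹ *ᵥ x) ≤ γ * (-(b/γ)) ^ 2 * γ := by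
      apply mul_le_mul_of_nonneg_left hx
      positivity
    calc γ * (-(b/γ)) ^ 2 * (x ⬝ᵥ E⁻¹ *ᵥ x) ≤ γ * (-(b/γ)) ^ 2 * γ := h3
      _ = b ^ 2 := by field_simp
  have hDle : D ≤ γ * b := by
    have hk2 : 2 * (b/γ) * D ≤ 2 * b ^ 2 := by nlinarith [key, hα2]
    have hbD : b * D ≤ γ * b ^ 2 := by
      have h := mul_le_mul_of_nonneg_left hk2 hγ.le
      rw [div_eq_mul_inv] at h
      rw [show γ * (2 * (b * γ⁻¹) * D) = (γ * γ⁻¹) * (2 * b * D) by ring,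
        mul_inv_cancel₀ hγ.ne', one_mul] at h
      linarith
    exact (mul_le_mul_iff_right₀ hb).mp (by linarith [hbD])
  calc γ⁻¹ * D ≤ γ⁻¹ * (γ * b) := by
        apply mul_le_mul_of_nonneg_left hDle (by positivity)
    _ = b := by field_simp
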